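/- Let t : Fin n → A × B with n ≥ 2 model a bag relation with at least two distinct Y-values (so pdepY < 1), and let K be the number of distinct X-values of t. Define τ(t') := (pdep(t') − pdepY)/(1 − pdepY) for any relation t' with the same marginals. Then the average of τ(t_σ) over all n! permutations σ of Fin n equals (K−1)/(n−1). (Expected value of Goodman–Kruskal τ under random (X;Y)-permutations, Piatetsky-Shapiro–Matheus.) -/

import Mathlib

namespace AFD

section PermCounting
open Finset

private lemma cardFix0 {n : ℕ} (x : Fin (n + 1)) :
    (Finset.univ.filter fun σ : Equiv.Perm (Fin (n + 1)) => σ 0 = x).card = n.factorial := by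
  have key : ∀ σ : Equiv.Perm (Fin (n + 1)), σ 0 = (Equiv.Perm.decomposeFin σ).1 := by
    intro σ
    conv_lhs => rw [← Equiv.symm_apply_apply Equiv.Perm.decomposeFin σ]
    exact Equiv.Perm.decomposeFin_symm_apply_zero _ _
  rw [Finset.card_equiv Equiv.Perm.decomposeFin
    (t := {x} ×ˢ (Finset.univ : Finset (Equiv.Perm (Fin n))))
    (fun σ => by
    simp only [Finset.mem_filter, Finset.mem_univ, true_and, Finset.mem_product,
      Finset.mem_singleton, and_true, key σ, eq_comm])]
  simp [Fintype.card_perm]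

private lemma cardFix {n : ℕ} (i x : Fin (n + 1)) :
    (Finset.univ.filter fun σ : Equiv.Perm (Fin (n + 1)) => σ i = x).card = n.factorial := by
  rw [Finset.card_equiv (Equiv.mulRight (Equiv.swap 0 i))
    (t := Finset.univ.filter fun σ : Equiv.Perm (Fin (n + 1)) => σ 0 = x)
    (fun σ => by simp [Equiv.Perm.mul_apply])]
  exact cardFix0 x

private lemma cardFix01 {n : ℕ} (x y : Fin (n + 2)) (hxy : x ≠ y) :
    (Finset.univ.filter fun σ : Equiv.Perm (Fin (n + 2)) => σ 0 = x ∧ σ 1 = y).card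
      = n.factorial := by
  have hw : Equiv.swap 0 x y ≠ 0 := fun h =>
    hxy (((Equiv.swap 0 x).injective (h.trans (Equiv.swap_apply_right 0 x).symm)).symm)
  set z : Fin (n + 1) := (Equiv.swap 0 x y).pred hw with hzdef
  have hz : Fin.succ z = Equiv.swap 0 x y := Fin.succ_pred _ hw
  have h := Finset.card_equiv (Equiv.Perm.decomposeFin.symm : Fin (n+2) × Equiv.Perm (Fin (n+1)) ≃ Equiv.Perm (Fin (n+2)))
    (s := Finset.univ.filter fun cp : Fin (n + 2) × Equiv.Perm (Fin (n + 1)) =>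
      cp.1 = x ∧ cp.2 0 = z)
    (t := Finset.univ.filter fun σ : Equiv.Perm (Fin (n + 2)) => σ 0 = x ∧ σ 1 = y) ?_
  · rw [← h]
    have : (Finset.univ.filter fun cp : Fin (n + 2) × Equiv.Perm (Fin (n + 1)) =>
        cp.1 = x ∧ cp.2 0 = z)
        = {x} ×ˢ (Finset.univ.filter fun p : Equiv.Perm (Fin (n + 1)) => p 0 = z) := by
      ext ⟨c, p⟩
      simp only [Finset.mem_filter, Finset.mem_univ, true_and, Finset.mem_product,
        Finset.mem_singleton]
    rw [this, Finset.card_product, Finset.card_singleton, one_mul, cardFix0]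
  · rintro ⟨c, p⟩
    simp only [Finset.mem_filter, Finset.mem_univ, true_and]
    have h0 : Equiv.Perm.decomposeFin.symm (c, p) 0 = c :=
      Equiv.Perm.decomposeFin_symm_apply_zero _ _
    have h1 : Equiv.Perm.decomposeFin.symm (c, p) 1 = Equiv.swap 0 c (Fin.succ (p 0)) := by
      have := Equiv.Perm.decomposeFin_symm_apply_succ p c 0
      simpa using this
    rw [h0, h1]
    constructor
    · rintro ⟨rfl, h2⟩
      exact ⟨rfl, by rw [h2, hz, Equiv.swap_apply_self]⟩
    · rintro ⟨rfl, h2⟩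
      refine ⟨rfl, ?_⟩
      have h3 : Fin.succ (p 0) = Equiv.swap 0 c y := by rw [← h2, Equiv.swap_apply_self]
      exact Fin.succ_injective _ (h3.trans hz.symm)

private lemma cardFix2 {n : ℕ} (i j x y : Fin (n + 2)) (hij : i ≠ j) (hxy : x ≠ y) :
    (Finset.univ.filter fun σ : Equiv.Perm (Fin (n + 2)) => σ i = x ∧ σ j = y).card
      = n.factorial := by
  set j' : Fin (n + 2) := Equiv.swap 0 i j with hj'def
  have hj' : j' ≠ 0 := by
    intro h
    exact hij (((Equiv.swap 0 i).injective (h.trans (Equiv.swap_apply_right 0 i).symm)).symm)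
  set ρ : Equiv.Perm (Fin (n + 2)) := Equiv.swap 0 i * Equiv.swap 1 j' with hρdef
  have hρ0 : ρ 0 = i := by
    rw [hρdef, Equiv.Perm.mul_apply,
      Equiv.swap_apply_of_ne_of_ne (zero_ne_one (α := Fin (n+2))) (Ne.symm hj'),
      Equiv.swap_apply_left]
  have hρ1 : ρ 1 = j := by
    rw [hρdef, Equiv.Perm.mul_apply, Equiv.swap_apply_left, hj'def, Equiv.swap_apply_self]
  rw [Finset.card_equiv (Equiv.mulRight ρ)
    (t := Finset.univ.filter fun σ : Equiv.Perm (Fin (n + 2)) => σ 0 = x ∧ σ 1 = y)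
    (fun σ => by simp [Equiv.Perm.mul_apply, hρ0, hρ1])]
  exact cardFix01 x y hxy

private lemma cardMem {n : ℕ} (i : Fin (n + 1)) (T : Finset (Fin (n + 1))) :
    (Finset.univ.filter fun σ : Equiv.Perm (Fin (n + 1)) => σ i ∈ T).card
      = T.card * n.factorial := by
  rw [Finset.card_eq_sum_card_fiberwise (f := fun σ => σ i)
    (s := Finset.univ.filter fun σ : Equiv.Perm (Fin (n + 1)) => σ i ∈ T) (t := T)
    (fun σ hσ => (Finset.mem_filter.mp hσ).2)]
  rw [Finset.sum_congr rfl (fun x hx => ?_), Finset.sum_const, smul_eq_mul]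
  rw [Finset.filter_filter]
  rw [show (Finset.univ.filter fun σ : Equiv.Perm (Fin (n + 1)) => σ i ∈ T ∧ σ i = x)
      = Finset.univ.filter fun σ => σ i = x from
    Finset.filter_congr (fun σ _ => ⟨fun h => h.2, fun h => ⟨h ▸ hx, h⟩⟩)]
  exact cardFix i x

private lemma cardMem2 {n : ℕ} (i j : Fin (n + 2)) (hij : i ≠ j) (T : Finset (Fin (n + 2))) :
    (Finset.univ.filter fun σ : Equiv.Perm (Fin (n + 2)) => σ i ∈ T ∧ σ j ∈ T).card
      = T.card * (T.card - 1) * n.factorial := by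
  rw [Finset.card_eq_sum_card_fiberwise (f := fun σ => (σ i, σ j))
    (s := Finset.univ.filter fun σ : Equiv.Perm (Fin (n + 2)) => σ i ∈ T ∧ σ j ∈ T)
    (t := T ×ˢ T)
    (fun σ hσ => by
      have h := (Finset.mem_filter.mp hσ).2
      exact Finset.mem_product.mpr ⟨h.1, h.2⟩)]
  have hfib : ∀ p ∈ T ×ˢ T,
      ((Finset.univ.filter fun σ : Equiv.Perm (Fin (n + 2)) => σ i ∈ T ∧ σ j ∈ T).filter
        fun σ => (σ i, σ j) = p).card = if p.1 = p.2 then 0 else n.factorial := by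
    rintro ⟨x, y⟩ hp
    rw [Finset.mem_product] at hp
    rw [Finset.filter_filter]
    by_cases hxy : x = y
    · subst hxy
      rw [if_pos rfl, Finset.card_eq_zero, Finset.filter_eq_empty_iff]
      rintro σ _ ⟨_, h2⟩
      rw [Prod.mk.injEq] at h2
      exact hij (σ.injective (h2.1.trans h2.2.symm))
    · rw [if_neg hxy]
      rw [show (Finset.univ.filter fun σ : Equiv.Perm (Fin (n + 2)) =>
          (σ i ∈ T ∧ σ j ∈ T) ∧ (σ i, σ j) = (x, y))
          = Finset.univ.filter fun σ => σ i = x ∧ σ j = y from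
        Finset.filter_congr (fun σ _ => by
          rw [Prod.mk.injEq]
          exact ⟨fun h => h.2, fun h => ⟨⟨h.1 ▸ hp.1, h.2 ▸ hp.2⟩, h⟩⟩)]
      exact cardFix2 i j x y hij hxy
  rw [Finset.sum_congr rfl hfib, Finset.sum_product]
  have hinner : ∀ x ∈ T,
      (∑ y ∈ T, if x = y then 0 else n.factorial) = (T.card - 1) * n.factorial := by
    intro x hx
    rw [← Finset.add_sum_erase _ _ hx, if_pos rfl, zero_add,
      Finset.sum_congr rfl (fun y hy => if_neg (Finset.ne_of_mem_erase hy).symm),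
      Finset.sum_const, smul_eq_mul, Finset.card_erase_of_mem hx]
  rw [Finset.sum_congr rfl hinner, Finset.sum_const, smul_eq_mul, mul_assoc]

private lemma keySum {n : ℕ} (S T : Finset (Fin (n + 2))) :
    ∑ σ : Equiv.Perm (Fin (n + 2)), ((S.filter fun i => σ i ∈ T).card) ^ 2
      = S.card * (T.card * (n + 1).factorial
          + (S.card - 1) * (T.card * (T.card - 1) * n.factorial)) := by
  have step1 : ∀ σ : Equiv.Perm (Fin (n + 2)),
      ((S.filter fun i => σ i ∈ T).card) ^ 2
        = ∑ i ∈ S, ∑ j ∈ S, (if σ i ∈ T ∧ σ j ∈ T then 1 else 0) := by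
    intro σ
    rw [Finset.card_filter, sq, Finset.sum_mul_sum]
    exact Finset.sum_congr rfl fun i _ => Finset.sum_congr rfl fun j _ => by
      rw [ite_and, ite_mul, one_mul, zero_mul]
  rw [Finset.sum_congr rfl (fun σ _ => step1 σ), Finset.sum_comm]
  rw [Finset.sum_congr rfl (fun i _ => Finset.sum_comm)]
  have inner : ∀ i ∈ S, ∀ j ∈ S,
      (∑ σ : Equiv.Perm (Fin (n + 2)), if σ i ∈ T ∧ σ j ∈ T then 1 else 0)
        = if i = j then T.card * (n + 1).factorial
          else T.card * (T.card - 1) * n.factorial := by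
    intro i _ j _
    rw [← Finset.card_filter]
    by_cases hij : i = j
    · subst hij
      rw [if_pos rfl]
      rw [show (Finset.univ.filter fun σ : Equiv.Perm (Fin (n + 2)) => σ i ∈ T ∧ σ i ∈ T)
          = Finset.univ.filter fun σ => σ i ∈ T from
        Finset.filter_congr (fun σ _ => and_self_iff)]
      exact cardMem i T
    · rw [if_neg hij]
      exact cardMem2 i j hij T
  calc ∑ i ∈ S, ∑ j ∈ S, (∑ σ : Equiv.Perm (Fin (n + 2)), if σ i ∈ T ∧ σ j ∈ T then 1 else 0)
      = ∑ i ∈ S, ∑ j ∈ S, (if i = j then T.card * (n + 1).factorial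
          else T.card * (T.card - 1) * n.factorial) :=
        Finset.sum_congr rfl fun i hi => Finset.sum_congr rfl fun j hj => inner i hi j hj
    _ = ∑ _i ∈ S, (T.card * (n + 1).factorial
          + (S.card - 1) * (T.card * (T.card - 1) * n.factorial)) := by
        refine Finset.sum_congr rfl fun i hi => ?_
        rw [← Finset.add_sum_erase _ _ hi, if_pos rfl,
          Finset.sum_congr rfl (fun j hj => if_neg (Finset.ne_of_mem_erase hj).symm),
          Finset.sum_const, smul_eq_mul, Finset.card_erase_of_mem hi]
    _ = S.card * (T.card * (n + 1).factorial
          + (S.card - 1) * (T.card * (T.card - 1) * n.factorial)) := by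
        rw [Finset.sum_const, smul_eq_mul]

private lemma finalAlg (M K S F : ℝ) (hF : F ≠ 0) (hM1 : M + 1 ≠ 0) (hM2 : M + 2 ≠ 0)
    (hNS : (M + 2) ^ 2 - S ≠ 0) :
    (K * ((M + 2) * ((M + 1) * F / (M + 2)))
        + (M + 2 - K) * ((S - (M + 2)) * (F / (M + 2)))
        - (M + 2) * ((M + 1) * F) * (S / (M + 2) ^ 2))
      / (((M + 2) ^ 2 - S) / (M + 2) ^ 2) / ((M + 2) * ((M + 1) * F))
    = (K - 1) / (M + 2 - 1) := by
  have h21 : M + 2 - 1 = M + 1 := by ring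
  rw [h21, div_div]
  rw [div_eq_div_iff
    (mul_ne_zero (div_ne_zero hNS (by positivity))
      (mul_ne_zero hM2 (mul_ne_zero hM1 hF))) hM1]
  field_simp
  ring

end PermCounting


open Finset

variable {A B : Type*}

/-- Number of indices with X-value `a`. -/
def c1 {n : ℕ} [DecidableEq A] (t : Fin n → A × B) (a : A) : ℕ :=
  (Finset.univ.filter fun i => (t i).1 = a).card

/-- Number of indices with Y-value `b`. -/
def c2 {n : ℕ} [DecidableEq B] (t : Fin n → A × B) (b : B) : ℕ :=
  (Finset.univ.filter fun i => (t i).2 = b).card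

/-- Number of indices with tuple value `(a, b)`. -/
def cnt {n : ℕ} [DecidableEq A] [DecidableEq B] (t : Fin n → A × B) (a : A) (b : B) : ℕ :=
  (Finset.univ.filter fun i => t i = (a, b)).card

/-- Marginal probability of X-value `a`. -/
noncomputable def p1 {n : ℕ} [DecidableEq A] (t : Fin n → A × B) (a : A) : ℝ :=
  (c1 t a : ℝ) / n

/-- Marginal probability of Y-value `b`. -/
noncomputable def p2 {n : ℕ} [DecidableEq B] (t : Fin n → A × B) (b : B) : ℝ :=
  (c2 t b : ℝ) / n

/-- Joint probability of `(a, b)`. -/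
noncomputable def pJ {n : ℕ} [DecidableEq A] [DecidableEq B] (t : Fin n → A × B)
    (a : A) (b : B) : ℝ :=
  (cnt t a b : ℝ) / n

/-- Conditional probability of Y-value `b` given X-value `a` (with the `0/0 = 0` convention,
which is automatic for real division in Lean). -/
noncomputable def pC {n : ℕ} [DecidableEq A] [DecidableEq B] (t : Fin n → A × B)
    (a : A) (b : B) : ℝ :=
  pJ t a b / p1 t a

/-- The set of distinct X-values. -/
def domX {n : ℕ} [DecidableEq A] (t : Fin n → A × B) : Finset A :=
  Finset.univ.image fun i => (t i).1

/-- The set of distinct Y-values. -/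
def domY {n : ℕ} [DecidableEq B] (t : Fin n → A × B) : Finset B :=
  Finset.univ.image fun i => (t i).2

/-- The set of distinct tuples. -/
def domXY {n : ℕ} [DecidableEq A] [DecidableEq B] (t : Fin n → A × B) : Finset (A × B) :=
  Finset.univ.image t

/-- The probabilistic dependency `pdep(X → Y)`. -/
noncomputable def pdep {n : ℕ} [DecidableEq A] [DecidableEq B] (t : Fin n → A × B) : ℝ :=
  ∑ a ∈ domX t, p1 t a * ∑ b ∈ domY t, (pC t a b) ^ 2

/-- The probabilistic self-dependency `pdep(Y)`. -/
noncomputable def pdepY {n : ℕ} [DecidableEq B] (t : Fin n → A × B) : ℝ :=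
  ∑ b ∈ domY t, (p2 t b) ^ 2

/-- The (X;Y)-permutation of `t` induced by the permutation `σ`. -/
def permRel {n : ℕ} (t : Fin n → A × B) (σ : Equiv.Perm (Fin n)) : Fin n → A × B :=
  fun i => ((t i).1, (t (σ i)).2)

/-- `t` satisfies the functional dependency X → Y. -/
def satFD {n : ℕ} (t : Fin n → A × B) : Prop :=
  ∀ i j, (t i).1 = (t j).1 → (t i).2 = (t j).2

/- Expected value of Goodman–Kruskal τ under random (X;Y)-permutations
(Piatetsky-Shapiro–Matheus). -/
set_option maxHeartbeats 2000000 in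
theorem expected_tau_under_permutations {A B : Type*} [DecidableEq A] [DecidableEq B]
    {n : ℕ} (hn : 2 ≤ n) (t : Fin n → A × B) (hY : 1 < (domY t).card) :
    (∑ σ : Equiv.Perm (Fin n), (pdep (permRel t σ) - pdepY t) / (1 - pdepY t)) /
        (n.factorial : ℝ) =
      (((domX t).card : ℝ) - 1) / ((n : ℝ) - 1) := by
  obtain ⟨m, rfl⟩ : ∃ m, n = m + 2 := ⟨n - 2, by omega⟩
  clear hn
  -- basic positivity of counts on the domains
  have hc1pos : ∀ a ∈ domX t, 1 ≤ c1 t a := by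
    intro a ha
    obtain ⟨i, _, hi⟩ := Finset.mem_image.mp ha
    exact Finset.card_pos.mpr ⟨i, Finset.mem_filter.mpr ⟨Finset.mem_univ i, hi⟩⟩
  have hc2pos : ∀ b ∈ domY t, 1 ≤ c2 t b := by
    intro b hb
    obtain ⟨i, _, hi⟩ := Finset.mem_image.mp hb
    exact Finset.card_pos.mpr ⟨i, Finset.mem_filter.mpr ⟨Finset.mem_univ i, hi⟩⟩
  -- marginal sums
  have hsum1 : ∑ a ∈ domX t, c1 t a = m + 2 := by
    have := Finset.card_eq_sum_card_fiberwise (f := fun i => (t i).1)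
      (s := (Finset.univ : Finset (Fin (m + 2)))) (t := domX t)
      (fun i _ => Finset.mem_image.mpr ⟨i, Finset.mem_univ i, rfl⟩)
    simpa [c1] using this.symm
  have hsum2 : ∑ b ∈ domY t, c2 t b = m + 2 := by
    have := Finset.card_eq_sum_card_fiberwise (f := fun i => (t i).2)
      (s := (Finset.univ : Finset (Fin (m + 2)))) (t := domY t)
      (fun i _ => Finset.mem_image.mpr ⟨i, Finset.mem_univ i, rfl⟩)
    simpa [c2] using this.symm
  -- each Y-count is at most m+1
  have hc2le : ∀ b ∈ domY t, c2 t b ≤ m + 1 := by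
    intro b hb
    obtain ⟨b', hb', hne⟩ := Finset.exists_mem_ne hY b
    have hdisj : Disjoint (Finset.univ.filter fun i => (t i).2 = b)
        (Finset.univ.filter fun i => (t i).2 = b') := by
      refine Finset.disjoint_filter_filter' _ _ ?_
      rintro p hp1 hp2 i hi
      exact absurd ((hp1 i hi).symm.trans (hp2 i hi)) hne.symm
    have hle : c2 t b + c2 t b' ≤ m + 2 := by
      rw [c2, c2, ← Finset.card_union_of_disjoint hdisj]
      exact (Finset.card_le_card (Finset.subset_univ _)).trans_eq (by simp)
    have := hc2pos b' hb'
    omega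
  have hS2 : ∑ b ∈ domY t, (c2 t b) ^ 2 ≤ (m + 1) * (m + 2) := by
    calc ∑ b ∈ domY t, (c2 t b) ^ 2 ≤ ∑ b ∈ domY t, (m + 1) * c2 t b := by
          refine Finset.sum_le_sum fun b hb => ?_
          rw [sq]
          exact Nat.mul_le_mul_right _ (hc2le b hb)
      _ = (m + 1) * (m + 2) := by rw [← Finset.mul_sum, hsum2]
  -- permuted relation has same domains and X-marginals
  have hdomX : ∀ σ : Equiv.Perm (Fin (m + 2)), domX (permRel t σ) = domX t := fun _ => rfl
  have hc1p : ∀ (σ : Equiv.Perm (Fin (m + 2))) a, c1 (permRel t σ) a = c1 t a := fun _ _ => rfl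
  have hdomY : ∀ σ : Equiv.Perm (Fin (m + 2)), domY (permRel t σ) = domY t := by
    intro σ
    ext b
    simp only [domY, Finset.mem_image, Finset.mem_univ, true_and, permRel]
    exact ⟨fun ⟨i, h⟩ => ⟨σ i, h⟩, fun ⟨i, h⟩ => ⟨σ.symm i, by rw [Equiv.apply_symm_apply]; exact h⟩⟩
  -- counting form of cnt for the permuted relation
  have hcnt : ∀ (σ : Equiv.Perm (Fin (m + 2))) a b, cnt (permRel t σ) a b
      = (((Finset.univ.filter fun i => (t i).1 = a)).filter
          fun i => σ i ∈ Finset.univ.filter fun i' => (t i').2 = b).card := by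
    intro σ a b
    rw [cnt, Finset.filter_filter]
    congr 1
    apply Finset.filter_congr
    intro i _
    simp [permRel, Prod.ext_iff]
  -- the key expectation, in ℕ
  have hkey : ∀ a b, (∑ σ : Equiv.Perm (Fin (m + 2)), (cnt (permRel t σ) a b) ^ 2)
      = c1 t a * (c2 t b * (m + 1).factorial
          + (c1 t a - 1) * (c2 t b * (c2 t b - 1) * m.factorial)) := by
    intro a b
    rw [Finset.sum_congr rfl fun σ _ => by rw [hcnt σ a b]]
    exact keySum _ _
  -- real versions
  have hm2 : ((m : ℝ) + 2) ≠ 0 := by positivity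
  have hpdepf : ∀ σ : Equiv.Perm (Fin (m + 2)), pdep (permRel t σ)
      = ∑ a ∈ domX t, ∑ b ∈ domY t,
          (cnt (permRel t σ) a b : ℝ) ^ 2 / (((m : ℝ) + 2) * (c1 t a : ℝ)) := by
    intro σ
    rw [pdep, hdomX σ]
    refine Finset.sum_congr rfl fun a ha => ?_
    rw [hdomY σ, Finset.mul_sum]
    refine Finset.sum_congr rfl fun b hb => ?_
    have h1 : (c1 t a : ℝ) ≠ 0 := Nat.cast_ne_zero.mpr (by have := hc1pos a ha; omega)
    rw [p1, pC, pJ, p1, hc1p]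
    push_cast
    field_simp
  have hEq : (∑ σ : Equiv.Perm (Fin (m + 2)), pdep (permRel t σ))
      = ∑ a ∈ domX t, ∑ b ∈ domY t,
          ((c1 t a : ℝ) * ((c2 t b : ℝ) * ((m + 1).factorial : ℝ)
            + ((c1 t a : ℝ) - 1) * ((c2 t b : ℝ) * ((c2 t b : ℝ) - 1) * (m.factorial : ℝ))))
            / (((m : ℝ) + 2) * (c1 t a : ℝ)) := by
    rw [Finset.sum_congr rfl fun σ _ => hpdepf σ, Finset.sum_comm]
    refine Finset.sum_congr rfl fun a ha => ?_
    rw [Finset.sum_comm]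
    refine Finset.sum_congr rfl fun b hb => ?_
    rw [← Finset.sum_div]
    congr 1
    have hcast : (∑ σ : Equiv.Perm (Fin (m + 2)), ((cnt (permRel t σ) a b : ℝ)) ^ 2)
        = ((∑ σ : Equiv.Perm (Fin (m + 2)), (cnt (permRel t σ) a b) ^ 2 : ℕ) : ℝ) := by
      push_cast
      rfl
    rw [hcast, hkey a b]
    push_cast [Nat.cast_sub (hc1pos a ha), Nat.cast_sub (hc2pos b hb)]
    ring
  set F1 : ℝ := ((m + 1).factorial : ℝ) with hF1def
  set F0 : ℝ := (m.factorial : ℝ) with hF0def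
  set S : ℝ := ∑ b ∈ domY t, ((c2 t b : ℝ)) ^ 2 with hSdef
  set Kr : ℝ := ((domX t).card : ℝ) with hKdef
  have hEval : ∀ a ∈ domX t, ∀ b ∈ domY t,
      ((c1 t a : ℝ) * ((c2 t b : ℝ) * F1
          + ((c1 t a : ℝ) - 1) * ((c2 t b : ℝ) * ((c2 t b : ℝ) - 1) * F0)))
          / (((m : ℝ) + 2) * (c1 t a : ℝ))
        = (c2 t b : ℝ) * (F1 / ((m : ℝ) + 2))
          + ((c1 t a : ℝ) - 1) * (((c2 t b : ℝ) ^ 2 - (c2 t b : ℝ)) * (F0 / ((m : ℝ) + 2))) := by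
    intro a ha b hb
    have h1 : (c1 t a : ℝ) ≠ 0 := Nat.cast_ne_zero.mpr (by have := hc1pos a ha; omega)
    field_simp
  have hsum2R : ∑ b ∈ domY t, (c2 t b : ℝ) = (m : ℝ) + 2 := by
    rw [← Nat.cast_sum, hsum2]
    push_cast
    ring
  have hsum1R : ∑ a ∈ domX t, (c1 t a : ℝ) = (m : ℝ) + 2 := by
    rw [← Nat.cast_sum, hsum1]
    push_cast
    ring
  have hE : (∑ σ : Equiv.Perm (Fin (m + 2)), pdep (permRel t σ))
      = Kr * (((m : ℝ) + 2) * (F1 / ((m : ℝ) + 2)))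
        + (((m : ℝ) + 2) - Kr) * ((S - ((m : ℝ) + 2)) * (F0 / ((m : ℝ) + 2))) := by
    rw [hEq]
    have h1 : ∀ a ∈ domX t,
        (∑ b ∈ domY t,
          ((c1 t a : ℝ) * ((c2 t b : ℝ) * F1
            + ((c1 t a : ℝ) - 1) * ((c2 t b : ℝ) * ((c2 t b : ℝ) - 1) * F0)))
            / (((m : ℝ) + 2) * (c1 t a : ℝ)))
        = ((m : ℝ) + 2) * (F1 / ((m : ℝ) + 2))
          + ((c1 t a : ℝ) - 1) * ((S - ((m : ℝ) + 2)) * (F0 / ((m : ℝ) + 2))) := by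
      intro a ha
      rw [Finset.sum_congr rfl fun b hb => hEval a ha b hb, Finset.sum_add_distrib,
        ← Finset.sum_mul, hsum2R, ← Finset.mul_sum, ← Finset.sum_mul, Finset.sum_sub_distrib,
        ← hSdef, hsum2R]
    rw [Finset.sum_congr rfl h1, Finset.sum_add_distrib, Finset.sum_const, nsmul_eq_mul,
      ← hKdef, ← Finset.sum_mul, Finset.sum_sub_distrib, hsum1R, Finset.sum_const,
      nsmul_eq_mul, mul_one, ← hKdef]
  have hpdepY : pdepY t = S / ((m : ℝ) + 2) ^ 2 := by
    rw [pdepY, hSdef, Finset.sum_div]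
    refine Finset.sum_congr rfl fun b _ => ?_
    rw [p2, div_pow]
    push_cast
    ring
  have hSle : S ≤ ((m : ℝ) + 1) * ((m : ℝ) + 2) := by
    have : S = ((∑ b ∈ domY t, (c2 t b) ^ 2 : ℕ) : ℝ) := by rw [hSdef]; push_cast; rfl
    rw [this]
    calc ((∑ b ∈ domY t, (c2 t b) ^ 2 : ℕ) : ℝ) ≤ (((m + 1) * (m + 2) : ℕ) : ℝ) :=
          Nat.cast_le.mpr hS2
      _ = ((m : ℝ) + 1) * ((m : ℝ) + 2) := by push_cast; ring
  have hNS : (0 : ℝ) < ((m : ℝ) + 2) ^ 2 - S := by nlinarith [hSle]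
  have hNSne : ((m : ℝ) + 2) ^ 2 - S ≠ 0 := ne_of_gt hNS
  have hden : 1 - pdepY t = (((m : ℝ) + 2) ^ 2 - S) / ((m : ℝ) + 2) ^ 2 := by
    rw [hpdepY, sub_div, div_self (by positivity : ((m : ℝ) + 2) ^ 2 ≠ 0)]
  have hfac2 : (((m + 2).factorial : ℕ) : ℝ) = ((m : ℝ) + 2) * F1 := by
    rw [show m + 2 = (m + 1) + 1 from rfl, Nat.factorial_succ]
    push_cast [hF1def]
    ring
  have hfac1 : F1 = ((m : ℝ) + 1) * F0 := by
    rw [hF1def, hF0def, Nat.factorial_succ]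
    push_cast
    ring
  have hF0ne : F0 ≠ 0 := by
    rw [hF0def]
    exact Nat.cast_ne_zero.mpr m.factorial_ne_zero
  have hm1 : ((m : ℝ) + 1) ≠ 0 := by positivity
  rw [← Finset.sum_div, Finset.sum_sub_distrib, Finset.sum_const, Finset.card_univ,
    Fintype.card_perm, Fintype.card_fin, nsmul_eq_mul, hE, hden, hpdepY, hfac2, hfac1]
  rw [show ((m + 2 : ℕ) : ℝ) = (m : ℝ) + 2 by push_cast; ring]
  exact finalAlg (m : ℝ) Kr S F0 hF0ne hm1 hm2 hNSne


end AFD
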